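/- Define ψ(ξ) = ξ₁ξ₂² + (ξ₃ − ξ₂ξ₄)² on ℂ⁴, Γ = ∇ψ, and for ξ₂ ≠ 0 the kernel direction map κ(ξ) = ℂ-span of (ξ₃/ξ₂ − ξ₄, 0, ξ₂, 1). Then κ has no continuous extension to points of the set {ξ : ξ₂ = ξ₃ = 0}: for any ξ⁰ with ξ₂⁰ = ξ₃⁰ = 0, there exist two sequences ξʲ, ηʲ with ξ₂ʲ, η₂ʲ ≠ 0 converging to ξ⁰ such that the corresponding kernel lines κ(ξʲ) and κ(ηʲ) converge to two distinct lines in ℂ⁴. -/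
import Mathlib


/-- The spanning vector of the kernel line of the Hessian of
`ψ(ξ) = ξ₁ξ₂² + (ξ₃ − ξ₂ξ₄)²` at a point with `ξ₂ ≠ 0`. -/
noncomputable def kerVec (ξ : Fin 4 → ℂ) : Fin 4 → ℂ :=
  ![ξ 2 / ξ 1 - ξ 3, 0, ξ 1, 1]

theorem stmt_9 (ξ₀ : Fin 4 → ℂ) (h2 : ξ₀ 1 = 0) (h3 : ξ₀ 2 = 0) :
    ∃ (ξ η : ℕ → Fin 4 → ℂ) (w₁ w₂ : Fin 4 → ℂ),
      (∀ j, (ξ j) 1 ≠ 0) ∧ (∀ j, (η j) 1 ≠ 0) ∧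
      Filter.Tendsto ξ Filter.atTop (nhds ξ₀) ∧
      Filter.Tendsto η Filter.atTop (nhds ξ₀) ∧
      Filter.Tendsto (fun j => ‖kerVec (ξ j)‖⁻¹ • kerVec (ξ j)) Filter.atTop (nhds w₁) ∧
      Filter.Tendsto (fun j => ‖kerVec (η j)‖⁻¹ • kerVec (η j)) Filter.atTop (nhds w₂) ∧
      w₁ ≠ 0 ∧ w₂ ≠ 0 ∧
      Submodule.span ℂ {w₁} ≠ Submodule.span ℂ {w₂} := by
  -- the small parameter
  set ε : ℕ → ℂ := fun j => ((1 / (j + 1 : ℝ) : ℝ) : ℂ) with hε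
  have hεne : ∀ j, ε j ≠ 0 := by
    intro j
    simp only [hε, ne_eq, Complex.ofReal_eq_zero]
    positivity
  have hε0 : Filter.Tendsto ε Filter.atTop (nhds 0) := by
    have := (Complex.continuous_ofReal.tendsto 0).comp
      tendsto_one_div_add_atTop_nhds_zero_nat
    simpa [Function.comp_def, hε] using this
  -- the two sequences
  set ξ : ℕ → Fin 4 → ℂ := fun j => ![ξ₀ 0, ε j, 0, ξ₀ 3] with hξ
  set η : ℕ → Fin 4 → ℂ := fun j => ![ξ₀ 0, ε j, ε j, ξ₀ 3] with hη
  -- limit direction vectors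
  set v : Fin 4 → ℂ := ![-ξ₀ 3, 0, 0, 1] with hv
  set u : Fin 4 → ℂ := ![1 - ξ₀ 3, 0, 0, 1] with hu
  have hvne : v ≠ 0 := by
    intro h
    have := congrFun h 3
    simp [hv] at this
  have hune : u ≠ 0 := by
    intro h
    have := congrFun h 3
    simp [hu] at this
  have hkξ : ∀ j, kerVec (ξ j) = ![-ξ₀ 3, 0, ε j, 1] := by
    intro j
    funext i
    fin_cases i <;> simp [kerVec, hξ, hεne j]
  have hkη : ∀ j, kerVec (η j) = ![1 - ξ₀ 3, 0, ε j, 1] := by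
    intro j
    funext i
    fin_cases i <;> simp [kerVec, hη, div_self (hεne j)]
  -- raw convergence of kernel vectors
  have hkξv : Filter.Tendsto (fun j => kerVec (ξ j)) Filter.atTop (nhds v) := by
    rw [tendsto_pi_nhds]
    intro i
    simp only [hkξ]
    fin_cases i <;> simp [hv] <;> exact hε0
  have hkηu : Filter.Tendsto (fun j => kerVec (η j)) Filter.atTop (nhds u) := by
    rw [tendsto_pi_nhds]
    intro i
    simp only [hkη]
    fin_cases i <;> simp [hu] <;> exact hε0
  -- normalized convergence
  have hnv : ‖v‖ ≠ 0 := norm_ne_zero_iff.mpr hvne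
  have hnu : ‖u‖ ≠ 0 := norm_ne_zero_iff.mpr hune
  have hwξ : Filter.Tendsto (fun j => ‖kerVec (ξ j)‖⁻¹ • kerVec (ξ j)) Filter.atTop
      (nhds (‖v‖⁻¹ • v)) := ((hkξv.norm.inv₀ hnv).smul hkξv)
  have hwη : Filter.Tendsto (fun j => ‖kerVec (η j)‖⁻¹ • kerVec (η j)) Filter.atTop
      (nhds (‖u‖⁻¹ • u)) := ((hkηu.norm.inv₀ hnu).smul hkηu)
  refine ⟨ξ, η, ‖v‖⁻¹ • v, ‖u‖⁻¹ • u, ?_, ?_, ?_, ?_, hwξ, hwη, ?_, ?_, ?_⟩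
  · intro j; simp [hξ, hεne j]
  · intro j; simp [hη, hεne j]
  · rw [tendsto_pi_nhds]
    intro i
    fin_cases i <;> simp [hξ, h2, h3] <;> exact hε0
  · rw [tendsto_pi_nhds]
    intro i
    fin_cases i <;> simp [hη, h2, h3] <;> exact hε0
  · exact smul_ne_zero (inv_ne_zero hnv) hvne
  · exact smul_ne_zero (inv_ne_zero hnu) hune
  · -- spans of the normalized vectors equal spans of v, u
    have e1 : Submodule.span ℂ {‖v‖⁻¹ • v} = Submodule.span ℂ {v} := by
      rw [show (‖v‖⁻¹ • v) = ((‖v‖⁻¹ : ℝ) : ℂ) • v from (Complex.coe_smul _ _).symm]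
      exact Submodule.span_singleton_smul_eq
        (IsUnit.mk0 _ (by exact_mod_cast inv_ne_zero hnv)) v
    have e2 : Submodule.span ℂ {‖u‖⁻¹ • u} = Submodule.span ℂ {u} := by
      rw [show (‖u‖⁻¹ • u) = ((‖u‖⁻¹ : ℝ) : ℂ) • u from (Complex.coe_smul _ _).symm]
      exact Submodule.span_singleton_smul_eq
        (IsUnit.mk0 _ (by exact_mod_cast inv_ne_zero hnu)) u
    rw [e1, e2]
    intro h
    have hu_mem : u ∈ Submodule.span ℂ {v} := by
      rw [h]; exact Submodule.mem_span_singleton_self u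
    obtain ⟨a, ha⟩ := Submodule.mem_span_singleton.mp hu_mem
    have h3' := congrFun ha 3
    have h0' := congrFun ha 0
    simp [hv, hu] at h3' h0'
    rw [h3'] at h0'
    simp at h0'
    -- h0' : 1 - ξ₀ 3 = -ξ₀ 3 gives 1 = 0
    have : (1 : ℂ) = 0 := by linear_combination -h0'
    exact one_ne_zero this
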